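/- Given n specimens and w pairwise query windows q_1,…,q_w satisfying lcm(q_i,q_j) ≥ n for all i ≠ j, the light Chinese design matrix (the vertical concatenation of the w submatrices where submatrix i has a 1 in entry (r, x) iff x ≡ r mod q_i) has the property that any two distinct columns have dot product at most 1. -/

import Mathlib

/-- The light Chinese design: row `(i, r)` and column `x` (specimen `x+1 ∈ {1,…,n}`)
has a `1` iff `x + 1 ≡ r (mod q i)`. -/
def chineseDesign (n w : ℕ) (q : Fin w → ℕ) : (Σ i : Fin w, Fin (q i)) → Fin n → Bool :=
  fun p x => decide ((x.val + 1) % q p.1 = p.2.val)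

/-- In a light Chinese design with `lcm (q i) (q j) ≥ n` for `i ≠ j`,
any two distinct columns have dot product at most `1`. -/
theorem chineseDesign_colDot_le_one (n w : ℕ) (q : Fin w → ℕ)
    (hq : ∀ i, 0 < q i)
    (hlcm : ∀ i j : Fin w, i ≠ j → n ≤ Nat.lcm (q i) (q j))
    (x y : Fin n) (hxy : x ≠ y) :
    (Finset.univ.filter fun p : Σ i : Fin w, Fin (q i) =>
      chineseDesign n w q p x = true ∧ chineseDesign n w q p y = true).card ≤ 1 := by
  apply Finset.card_le_one.mpr
  intro p hp p' hp'
  simp only [Finset.mem_filter, chineseDesign, decide_eq_true_eq] at hp hp'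
  obtain ⟨-, hpx, hpy⟩ := hp
  obtain ⟨-, hpx', hpy'⟩ := hp'
  by_cases h : p.1 = p'.1
  · obtain ⟨i, r⟩ := p
    obtain ⟨i', r'⟩ := p'
    simp only at h
    subst h
    simp only at hpx hpx'
    congr 1
    exact Fin.ext (hpx ▸ hpx')
  · exfalso
    have h1 : ((q p.1 : ℤ)) ∣ (y.val : ℤ) - x.val := by
      have : (x.val + 1) ≡ (y.val + 1) [MOD q p.1] := by
        unfold Nat.ModEq; rw [hpx, hpy]
      have := this.dvd
      have : ((q p.1 : ℤ)) ∣ ((y.val : ℤ) + 1) - ((x.val : ℤ) + 1) := by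
        exact_mod_cast this
      simpa using this
    have h2 : ((q p'.1 : ℤ)) ∣ (y.val : ℤ) - x.val := by
      have : (x.val + 1) ≡ (y.val + 1) [MOD q p'.1] := by
        unfold Nat.ModEq; rw [hpx', hpy']
      have := this.dvd
      have : ((q p'.1 : ℤ)) ∣ ((y.val : ℤ) + 1) - ((x.val : ℤ) + 1) := by
        exact_mod_cast this
      simpa using this
    have hlcmdvd : ((Nat.lcm (q p.1) (q p'.1) : ℤ)) ∣ (y.val : ℤ) - x.val := by
      have := Int.coe_lcm_dvd h1 h2
      simpa [Int.lcm] using this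
    have hd0 : (y.val : ℤ) - x.val ≠ 0 := by
      intro h0
      apply hxy
      apply Fin.ext
      omega
    have hle : (Nat.lcm (q p.1) (q p'.1) : ℤ) ≤ |(y.val : ℤ) - x.val| := by
      exact Int.le_of_dvd (abs_pos.mpr hd0) ((dvd_abs _ _).mpr hlcmdvd)
    have hn := hlcm p.1 p'.1 h
    have hx := x.isLt
    have hy := y.isLt
    have : |(y.val : ℤ) - x.val| < n := by
      rw [abs_lt]; omega
    omega
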